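/- The ring of difference polynomials K{y} over an ordinary difference field K does not satisfy the ascending chain condition for complete difference ideals. -/

import Mathlib

open MvPolynomial

def IsSigmaIdeal {R : Type*} [CommRing R] (σ : R →+* R) (I : Ideal R) : Prop :=
  ∀ a ∈ I, σ a ∈ I

/-- A σ-ideal is complete if whenever a product of positive powers of transforms of `a`
lies in `I`, some power of some transform of `a` lies in `I`. -/
def IsCompleteIdeal {R : Type*} [CommRing R] (σ : R →+* R) (I : Ideal R) : Prop :=
  IsSigmaIdeal σ I ∧ ∀ (a : R) (m : ℕ) (k d : Fin (m + 1) → ℕ), (∀ i, 1 ≤ d i) →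
    (∏ i, ((⇑σ)^[k i] a) ^ d i) ∈ I → ∃ (k' d' : ℕ), ((⇑σ)^[k'] a) ^ d' ∈ I

noncomputable def shift {K : Type*} [Field K] (σK : K →+* K) :
    MvPolynomial ℕ K →+* MvPolynomial ℕ K :=
  eval₂Hom (MvPolynomial.C.comp σK) (fun n => MvPolynomial.X (n + 1))

-- auxiliary
section Aux

variable (K : Type*) [Field K]

/-- total degree of a monomial exponent -/
def degD (d : ℕ →₀ ℕ) : ℕ := d.sum fun _ e => e

lemma degD_add (d₁ d₂ : ℕ →₀ ℕ) : degD (d₁ + d₂) = degD d₁ + degD d₂ :=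
  Finsupp.sum_add_index' (fun _ => rfl) (fun _ _ _ => rfl)

/-- for a monomial predicate stable under multiplying by monomials,
the set of polynomials all of whose monomials satisfy it is an ideal -/
def monIdeal (Q : (ℕ →₀ ℕ) → Prop) (hQ : ∀ d₁ d₂, Q d₂ → Q (d₁ + d₂)) :
    Ideal (MvPolynomial ℕ K) where
  carrier := {p | ∀ d ∈ p.support, Q d}
  zero_mem' := by simp
  add_mem' := by
    intro p q hp hq d hd
    rcases Finset.mem_union.mp (MvPolynomial.support_add hd) with h | h
    · exact hp d h
    · exact hq d h
  smul_mem' := by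
    classical
    intro c p hp d hd
    rw [smul_eq_mul] at hd
    have := MvPolynomial.support_mul c p hd
    rcases Finset.mem_add.mp this with ⟨d₁, h₁, d₂, h₂, rfl⟩
    exact hQ d₁ d₂ (hp d₂ h₂)

lemma mem_monIdeal {Q hQ} {p : MvPolynomial ℕ K} :
    p ∈ monIdeal K Q hQ ↔ ∀ d ∈ p.support, Q d := Iff.rfl

def Ok (n : ℕ) (d : ℕ →₀ ℕ) : Prop :=
  3 ≤ degD d ∨ ∃ i k, 1 ≤ k ∧ k ≤ n ∧ 1 ≤ d i ∧ 1 ≤ d (i + k)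

lemma ok_add (n : ℕ) (d₁ d₂ : ℕ →₀ ℕ) (h : Ok n d₂) : Ok n (d₁ + d₂) := by
  rcases h with h | ⟨i, k, h1, h2, h3, h4⟩
  · left; rw [degD_add]; omega
  · right
    exact ⟨i, k, h1, h2, le_trans h3 (by simp), le_trans h4 (by simp)⟩

def S (n : ℕ) : Ideal (MvPolynomial ℕ K) := monIdeal K (Ok n) (ok_add n)

def D (m : ℕ) : Ideal (MvPolynomial ℕ K) :=
  monIdeal K (fun d => m ≤ degD d) (fun d₁ d₂ h => by
    show m ≤ degD (d₁ + d₂); rw [degD_add]; omega)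

noncomputable def P : Ideal (MvPolynomial ℕ K) := Ideal.span (Set.range X)

def gens (n : ℕ) : Set (MvPolynomial ℕ K) :=
  {p | ∃ i k, 1 ≤ k ∧ k ≤ n ∧ p = X i * X (i + k)}

noncomputable def myI (n : ℕ) : Ideal (MvPolynomial ℕ K) := P K ^ 3 ⊔ Ideal.span (gens K n)

lemma P_le_D1 : P K ≤ D K 1 := by
  rw [P, Ideal.span_le]
  rintro _ ⟨i, rfl⟩
  intro d hd
  rw [MvPolynomial.support_X, Finset.mem_singleton] at hd
  subst hd
  simp [degD, Finsupp.sum_single_index]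

lemma D_mul (a b : ℕ) : D K a * D K b ≤ D K (a + b) := by
  classical
  rw [Ideal.mul_le]
  intro p hp q hq d hd
  rcases Finset.mem_add.mp (MvPolynomial.support_mul p q hd) with ⟨d₁, h₁, d₂, h₂, rfl⟩
  have := hp d₁ h₁
  have := hq d₂ h₂
  rw [degD_add]; omega

lemma P3_le_D3 : P K ^ 3 ≤ D K 3 := by
  have h1 : P K ^ 3 ≤ D K 1 ^ 3 := Ideal.pow_right_mono (P_le_D1 K) 3
  refine le_trans h1 ?_
  have : D K 1 ^ 3 = D K 1 * (D K 1 * D K 1) := by ring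
  rw [this]
  calc D K 1 * (D K 1 * D K 1) ≤ D K 1 * D K 2 := Ideal.mul_mono_right (D_mul K 1 1)
    _ ≤ D K 3 := D_mul K 1 2

lemma D3_le_S (n : ℕ) : D K 3 ≤ S K n := fun _ hp d hd => Or.inl (hp d hd)

lemma gens_le_S (n : ℕ) : Ideal.span (gens K n) ≤ S K n := by
  classical
  rw [Ideal.span_le]
  rintro _ ⟨i, k, hk1, hkn, rfl⟩
  intro d hd
  rcases Finset.mem_add.mp (MvPolynomial.support_mul _ _ hd) with ⟨d₁, h₁, d₂, h₂, rfl⟩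
  rw [MvPolynomial.support_X, Finset.mem_singleton] at h₁ h₂
  subst h₁; subst h₂
  right
  refine ⟨i, k, hk1, hkn, ?_, ?_⟩ <;>
    simp [Finsupp.single_apply, (by omega : ¬ i + k = i), (by omega : ¬ i = i + k)]

lemma myI_le_S (n : ℕ) : myI K n ≤ S K n :=
  sup_le (le_trans (P3_le_D3 K) (D3_le_S K n)) (gens_le_S K n)

lemma constantCoeff_of_mem_S {n : ℕ} {p : MvPolynomial ℕ K} (hp : p ∈ S K n) :
    constantCoeff p = 0 := by
  by_contra h
  have h0 : (0 : ℕ →₀ ℕ) ∈ p.support := by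
    rw [MvPolynomial.mem_support_iff]
    simpa [constantCoeff_eq] using h
  rcases hp 0 h0 with h | ⟨i, k, _, _, h3, _⟩
  · simp [degD] at h
  · simp at h3

end Aux

section Shift

variable {K : Type*} [Field K] (σK : K →+* K)

lemma shift_X (i : ℕ) : shift σK (X i) = X (i + 1) := by
  simp [shift]

lemma shift_C (c : K) : shift σK (C c) = C (σK c) := by
  simp [shift]

lemma constantCoeff_shift (p : MvPolynomial ℕ K) :
    constantCoeff (shift σK p) = σK (constantCoeff p) := by
  have : (constantCoeff).comp (shift σK) = σK.comp (constantCoeff (σ := ℕ) (R := K)) := by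
    apply MvPolynomial.ringHom_ext
    · intro c; simp [shift_C]
    · intro i; simp [shift_X]
  exact RingHom.congr_fun this p

lemma constantCoeff_shift_iterate (k : ℕ) (p : MvPolynomial ℕ K) :
    constantCoeff ((⇑(shift σK))^[k] p) = (⇑σK)^[k] (constantCoeff p) := by
  induction k generalizing p with
  | zero => rfl
  | succ k ih =>
      rw [Function.iterate_succ_apply, Function.iterate_succ_apply, ih, constantCoeff_shift]

lemma map_shift_myI_le (n : ℕ) : Ideal.map (shift σK) (myI K n) ≤ myI K n := by
  rw [myI, Ideal.map_sup, Ideal.map_pow]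
  apply sup_le
  · refine le_trans (Ideal.pow_right_mono ?_ 3) le_sup_left
    rw [P, Ideal.map_span, Ideal.span_le]
    rintro _ ⟨_, ⟨i, rfl⟩, rfl⟩
    rw [shift_X]
    exact Ideal.subset_span ⟨i + 1, rfl⟩
  · rw [Ideal.map_span, Ideal.span_le]
    rintro _ ⟨_, ⟨i, k, hk1, hkn, rfl⟩, rfl⟩
    refine Ideal.mem_sup_right (Ideal.subset_span ?_)
    refine ⟨i + 1, k, hk1, hkn, ?_⟩
    rw [map_mul, shift_X, shift_X, add_right_comm]

end Shift

/-- `K{y}` does not satisfy the ascending chain condition for complete difference ideals: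
there is a strictly ascending chain of complete difference ideals. -/
theorem stmt_16 {K : Type*} [Field K] (σK : K →+* K) :
    ∃ I : ℕ → Ideal (MvPolynomial ℕ K),
      (∀ n, IsCompleteIdeal (shift σK) (I n)) ∧ ∀ n, I n < I (n + 1) := by
  refine ⟨fun n => myI K n, fun n => ⟨?_, ?_⟩, fun n => ?_⟩
  · -- sigma ideal
    intro a ha
    exact map_shift_myI_le σK n (Ideal.mem_map_of_mem _ ha)
  · -- complete
    intro a m k d hd hprod
    refine ⟨0, 3, ?_⟩
    rw [Function.iterate_zero, id]
    -- show constantCoeff a = 0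
    have hcc : constantCoeff (∏ i, ((⇑(shift σK))^[k i] a) ^ d i) = 0 :=
      constantCoeff_of_mem_S K (myI_le_S K n hprod)
    rw [map_prod] at hcc
    rw [Finset.prod_eq_zero_iff] at hcc
    obtain ⟨i, -, hi⟩ := hcc
    rw [map_pow, constantCoeff_shift_iterate, pow_eq_zero_iff (Nat.one_le_iff_ne_zero.mp (hd i))] at hi
    have hkinj : Function.Injective ((⇑σK)^[k i]) := Function.Injective.iterate σK.injective _
    have hzero : (⇑σK)^[k i] (0 : K) = 0 := Function.iterate_fixed (map_zero σK) _
    have hc0 : constantCoeff a = 0 := hkinj (hi.trans hzero.symm)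
    -- a ∈ P
    have haP : a ∈ P K := by
      rw [P, ← Set.image_univ, mem_ideal_span_X_image]
      intro m' hm'
      by_contra hcon
      push_neg at hcon
      have : m' = 0 := Finsupp.ext fun i => by simpa using hcon i (Set.mem_univ i)
      subst this
      exact (MvPolynomial.mem_support_iff.mp hm') (by simpa [constantCoeff_eq] using hc0)
    exact Ideal.mem_sup_left (Ideal.pow_mem_pow haP 3)
  · -- strict
    rw [SetLike.lt_iff_le_and_exists]
    constructor
    · exact sup_le_sup_left (Ideal.span_mono (by
        rintro _ ⟨i, kk, h1, h2, rfl⟩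
        exact ⟨i, kk, h1, by omega, rfl⟩)) _
    · refine ⟨X 0 * X (n + 1), ?_, ?_⟩
      · exact Ideal.mem_sup_right (Ideal.subset_span ⟨0, n + 1, by omega, le_refl _, by simp⟩)
      · intro hmem
        have hS := myI_le_S K n hmem
        classical
        set dd : ℕ →₀ ℕ := Finsupp.single 0 1 + Finsupp.single (n + 1) 1 with hdd
        have heq : (X 0 * X (n + 1) : MvPolynomial ℕ K) = monomial dd 1 := by
          rw [hdd, X, X, monomial_mul, one_mul]
        have hsupp : dd ∈ (X 0 * X (n + 1) : MvPolynomial ℕ K).support := by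
          rw [heq, MvPolynomial.support_monomial, if_neg one_ne_zero]
          exact Finset.mem_singleton_self _
        have hok := hS dd hsupp
        have hdeg : degD dd = 2 := by
          rw [hdd, degD_add]
          simp [degD, Finsupp.sum_single_index]
        have hdj : ∀ j, 1 ≤ dd j → j = 0 ∨ j = n + 1 := by
          intro j hj
          by_contra hcon
          push_neg at hcon
          rw [hdd] at hj
          simp [Finsupp.single_apply, hcon.1.symm, hcon.2.symm] at hj
        rcases hok with h | ⟨i, kk, hk1, hkn, hi, hik⟩
        · omega
        · rcases hdj i hi with rfl | rfl <;> rcases hdj _ hik with h' | h' <;> omega
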